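/- Let p be a prime, α ≥ 1, and let j, j' be integers with 0 ≤ j < j' ≤ α. Then there is no quandle automorphism f of the dihedral quandle Z_{p^α}^dih with f(0) = 0 and f(p^j mod p^α) = p^{j'} mod p^α; equivalently, the pairs (0, p^j) and (0, p^{j'}) in (Z/p^αZ)² lie in distinct orbits under the action of the automorphism group of Z_{p^α}^dih acting componentwise on pairs. -/
import Mathlib

/-- A quandle endomorphism of the dihedral quandle `Z_n^dih`. -/
def IsDihedralEnd (n : ℕ) (f : ZMod n → ZMod n) : Prop :=
  ∀ x y : ZMod n, f (2 * y - x) = 2 * f y - f x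

/-- A quandle automorphism of the dihedral quandle `Z_n^dih`. -/
def IsDihedralAut (n : ℕ) (f : ZMod n → ZMod n) : Prop :=
  IsDihedralEnd n f ∧ Function.Bijective f

theorem distinct_orbits_prime_power (p : ℕ) (hp : p.Prime) (α : ℕ) (hα : 1 ≤ α)
    (j j' : ℕ) (hjj' : j < j') (hj' : j' ≤ α) :
    ¬ ∃ f : ZMod (p ^ α) → ZMod (p ^ α), IsDihedralAut (p ^ α) f ∧
        f 0 = 0 ∧ f ((p : ZMod (p ^ α)) ^ j) = (p : ZMod (p ^ α)) ^ j' := by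
  haveI : Fact p.Prime := ⟨hp⟩
  haveI : NeZero (p ^ α) := ⟨pow_ne_zero α hp.pos.ne'⟩
  rintro ⟨f, ⟨hend, hbij⟩, h0, hf⟩
  have hneg : ∀ x : ZMod (p ^ α), f (-x) = - f x := by
    intro x; have := hend x 0; simpa [h0] using this
  have hdouble : ∀ y : ZMod (p ^ α), f (2 * y) = 2 * f y := by
    intro y; have := hend 0 y; simpa [h0] using this
  have hadd1 : ∀ k : ZMod (p ^ α), f (2 * k + 1) = 2 * f k + f 1 := by
    intro k
    have := hend (-1) k
    rw [sub_neg_eq_add, hneg 1] at this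
    linear_combination this
  -- In both cases we get f (p^k) = p^k * f 1, and (if p ∣ f 1) p ∣ f x for all x
  have main : (∀ k : ℕ, f ((p : ZMod (p ^ α)) ^ k) = (p : ZMod (p ^ α)) ^ k * f 1) ∧
      ((∃ c, f 1 = (p : ZMod (p ^ α)) * c) → ∀ x, ∃ d, f x = (p : ZMod (p ^ α)) * d) := by
    rcases eq_or_ne p 2 with hp2 | hp2
    · -- p = 2 case
      subst hp2
      have h2 : ((2 : ℕ) : ZMod (2 ^ α)) = (2 : ZMod (2 ^ α)) := by norm_cast
      constructor
      · intro k
        induction k with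
        | zero => simp
        | succ k ih =>
          have hstep : ((2:ℕ) : ZMod (2 ^ α)) ^ (k+1) = 2 * ((2:ℕ) : ZMod (2 ^ α)) ^ k := by
            rw [pow_succ, h2]; ring
          rw [hstep, hdouble, ih]
          ring
      · rintro ⟨c, hc⟩ x
        rw [h2] at hc ⊢
        have hx : ((x.val : ℕ) : ZMod (2 ^ α)) = x := ZMod.natCast_rightInverse x
        rcases Nat.even_or_odd x.val with ⟨k, hk⟩ | ⟨k, hk⟩
        · refine ⟨f (k : ZMod (2 ^ α)), ?_⟩
          rw [← hx, hk]
          push_cast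
          rw [show ((k : ZMod (2 ^ α)) + k) = 2 * k by ring, hdouble]
        · refine ⟨f (k : ZMod (2 ^ α)) + c, ?_⟩
          rw [← hx, hk]
          push_cast
          rw [show ((2 * (k : ZMod (2 ^ α)) + 1)) = 2 * k + 1 by ring, hadd1, hc]
          ring
    · -- p odd: 2 is a unit, f is additive, f x = x * f 1
      have hcop : Nat.Coprime 2 (p ^ α) := by
        apply Nat.Coprime.pow_right
        exact (Nat.coprime_primes Nat.prime_two hp).mpr (by omega)
      have hu : IsUnit (2 : ZMod (p ^ α)) := by
        have := (ZMod.isUnit_iff_coprime 2 (p ^ α)).mpr hcop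
        simpa using this
      obtain ⟨u, hu2⟩ := hu
      have hadd : ∀ a b : ZMod (p ^ α), f (a + b) = f a + f b := by
        intro a b
        have h2 : (2 : ZMod (p ^ α)) * ((↑u⁻¹ : ZMod (p ^ α)) * a) = a := by
          rw [← hu2, ← mul_assoc, Units.mul_inv, one_mul]
        have ht := hend (-b) ((↑u⁻¹ : ZMod (p ^ α)) * a)
        rw [sub_neg_eq_add, h2, hneg b] at ht
        have hd := hdouble ((↑u⁻¹ : ZMod (p ^ α)) * a)
        rw [h2] at hd
        linear_combination ht - hd
      have hnat : ∀ m : ℕ, f ((m : ZMod (p ^ α))) = (m : ZMod (p ^ α)) * f 1 := by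
        intro m
        induction m with
        | zero => simpa using h0
        | succ m ih => push_cast; rw [hadd, ih]; ring
      have hx : ∀ x : ZMod (p ^ α), f x = x * f 1 := by
        intro x
        have := hnat x.val
        rwa [ZMod.natCast_rightInverse x] at this
      constructor
      · intro k
        have := hx ((p : ZMod (p ^ α)) ^ k)
        simpa using this
      · rintro ⟨c, hc⟩ x
        exact ⟨x * c, by rw [hx x, hc]; ring⟩
  obtain ⟨hlinpow, hall⟩ := main
  -- p ∣ f 1
  have hval : (p : ZMod (p ^ α)) ^ j * f 1 = (p : ZMod (p ^ α)) ^ j' := by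
    linear_combination hf - hlinpow j
  have hpc : ∃ c : ZMod (p ^ α), f 1 = (p : ZMod (p ^ α)) * c := by
    set u := (f 1).val with hu
    have hfu : f 1 = ((u : ℕ) : ZMod (p ^ α)) := (ZMod.natCast_rightInverse (f 1)).symm
    have heq : ((p ^ j * u : ℕ) : ZMod (p ^ α)) = ((p ^ j' : ℕ) : ZMod (p ^ α)) := by
      push_cast
      rw [← hfu]
      exact hval
    have hmod : (p ^ j * u) ≡ (p ^ j') [MOD p ^ α] := (ZMod.natCast_eq_natCast_iff _ _ _).mp heq
    have hdvd : ((p : ℤ) ^ α) ∣ ((p ^ j' : ℕ) : ℤ) - ((p ^ j * u : ℕ) : ℤ) := by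
      have := (Nat.modEq_iff_dvd).mp hmod
      simpa using this
    have hj1 : (p : ℤ) ^ (j + 1) ∣ ((p : ℤ) ^ j * u) := by
      have h1 : (p : ℤ) ^ (j + 1) ∣ (p : ℤ) ^ α := pow_dvd_pow _ (by omega)
      have h2 : (p : ℤ) ^ (j + 1) ∣ (p : ℤ) ^ j' := pow_dvd_pow _ (by omega)
      have h3 : (p : ℤ) ^ (j + 1) ∣ ((p ^ j' : ℕ) : ℤ) - ((p ^ j * u : ℕ) : ℤ) :=
        h1.trans hdvd
      have h4 : (p : ℤ) ^ (j + 1) ∣ ((p ^ j * u : ℕ) : ℤ) := by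
        have := dvd_sub (show (p:ℤ)^(j+1) ∣ ((p ^ j' : ℕ) : ℤ) by push_cast; exact h2) h3
        push_cast at this ⊢
        simpa using this
      push_cast at h4
      exact h4
    have hpu : (p : ℤ) ∣ (u : ℤ) := by
      rw [pow_succ] at hj1
      have hne : (p : ℤ) ^ j ≠ 0 := pow_ne_zero _ (by exact_mod_cast hp.pos.ne')
      exact (mul_dvd_mul_iff_left hne).mp hj1
    obtain ⟨k, hk⟩ := Int.natCast_dvd_natCast.mp hpu
    exact ⟨(k : ZMod (p ^ α)), by rw [hfu, hk]; push_cast; ring⟩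
  -- contradiction with surjectivity
  obtain ⟨z, hz⟩ := hbij.2 1
  obtain ⟨d, hd⟩ := hall hpc z
  rw [hz] at hd
  have := congrArg (ZMod.castHom (dvd_pow_self p (by omega : α ≠ 0)) (ZMod p)) hd
  rw [map_one, map_mul, map_natCast, ZMod.natCast_self, zero_mul] at this
  exact one_ne_zero this
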